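/- Let N ≥ 2 and let M be an N×N complex Hermitian matrix with trace 1 such that Tr[M²] ≤ 1/(N−1). Then M is positive semidefinite, i.e., M is a density matrix. Equivalently, the closed ball of radius r_N = √(2/(N(N−1))) centered at the origin of ℝ^{N²-1} is contained in Bloch space 𝛃(Q_N). -/

import Mathlib

open scoped ComplexOrder

open Matrix in
lemma trace_eq_sum_eigen {n : ℕ} (A : Matrix (Fin n) (Fin n) ℂ) (hA : A.IsHermitian) :
    A.trace = ∑ i, (hA.eigenvalues i : ℂ) := by
  conv_lhs => rw [hA.spectral_theorem, Unitary.conjStarAlgAut_apply]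
  rw [trace_mul_cycle, (Matrix.mem_unitaryGroup_iff').mp (hA.eigenvectorUnitary).2,
    one_mul, trace_diagonal]
  rfl

open Matrix in
lemma trace_sq_eq_sum_eigen {n : ℕ} (A : Matrix (Fin n) (Fin n) ℂ) (hA : A.IsHermitian) :
    (A * A).trace = ∑ i, ((hA.eigenvalues i : ℂ))^2 := by
  conv_lhs => rw [hA.spectral_theorem, Unitary.conjStarAlgAut_apply]
  set U : Matrix (Fin n) (Fin n) ℂ := (hA.eigenvectorUnitary : Matrix (Fin n) (Fin n) ℂ)
  set D : Matrix (Fin n) (Fin n) ℂ := diagonal (RCLike.ofReal ∘ hA.eigenvalues)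
  have hU : star U * U = 1 := (Matrix.mem_unitaryGroup_iff').mp (hA.eigenvectorUnitary).2
  have : (U * D * star U) * (U * D * star U) = U * (D * D) * star U := by
    simp only [mul_assoc]
    rw [← mul_assoc (star U) U, hU, one_mul]
  rw [this, trace_mul_cycle]
  rw [← mul_assoc, hU, one_mul, diagonal_mul_diagonal, trace_diagonal]
  simp [sq]

/-- Let `N ≥ 2` and let `M` be an `N×N` complex Hermitian matrix with
trace 1 such that `Tr[M²] ≤ 1/(N−1)`. Then `M` is positive semidefinite, i.e. a density
matrix. Equivalently, the closed ball of radius `r_N = √(2/(N(N−1)))` centered at the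
origin of `ℝ^{N²−1}` is contained in Bloch space. -/
theorem hermitian_trace_one_small_purity_posSemidef
    (N : ℕ) (hN : 2 ≤ N) (M : Matrix (Fin N) (Fin N) ℂ)
    (hM : M.IsHermitian) (htr : M.trace = 1)
    (hpur : (M * M).trace ≤ 1 / ((N : ℂ) - 1)) :
    M.PosSemidef := by
  set l := hM.eigenvalues with hl
  have hNR : (1:ℝ) ≤ (N:ℝ) - 1 := by
    have : (2:ℝ) ≤ N := by exact_mod_cast hN
    linarith
  have hNpos : (0:ℝ) < (N:ℝ) - 1 := by linarith
  -- real sum of eigenvalues = 1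
  have hsum : ∑ i, l i = 1 := by
    have := trace_eq_sum_eigen M hM
    rw [htr] at this
    have : ((∑ i, l i : ℝ) : ℂ) = 1 := by push_cast; rw [← this]
    exact_mod_cast this
  have hsq : ∑ i, (l i)^2 ≤ 1 / ((N:ℝ) - 1) := by
    have h2 := trace_sq_eq_sum_eigen M hM
    rw [h2] at hpur
    have : ((∑ i, (l i)^2 : ℝ) : ℂ) ≤ ((1 / ((N:ℝ) - 1) : ℝ) : ℂ) := by
      push_cast
      convert hpur using 2
    exact_mod_cast this
  apply hM.posSemidef_iff_eigenvalues_nonneg.mpr ∘ fun (h : ∀ j, 0 ≤ l j) => h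
  intro j
  by_contra hneg
  push_neg at hneg
  -- Cauchy-Schwarz on the rest
  have hcs : (∑ i ∈ Finset.univ.erase j, l i)^2 ≤
      ((N:ℝ) - 1) * ∑ i ∈ Finset.univ.erase j, (l i)^2 := by
    have := sq_sum_le_card_mul_sum_sq (s := Finset.univ.erase j) (f := l)
    have hcard : (Finset.univ.erase j).card = N - 1 := by
      rw [Finset.card_erase_of_mem (Finset.mem_univ j), Finset.card_univ, Fintype.card_fin]
    rw [hcard] at this
    calc (∑ i ∈ Finset.univ.erase j, l i)^2 ≤ (↑(N-1)) * ∑ i ∈ Finset.univ.erase j, (l i)^2 :=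
          this
      _ = ((N:ℝ) - 1) * ∑ i ∈ Finset.univ.erase j, (l i)^2 := by
          congr 1
          have : (1:ℕ) ≤ N := by omega
          push_cast [this]
          ring
  have hrest_sum : ∑ i ∈ Finset.univ.erase j, l i = 1 - l j := by
    have := Finset.add_sum_erase Finset.univ l (Finset.mem_univ j)
    rw [hsum] at this
    linarith
  have hrest_sq : ∑ i ∈ Finset.univ.erase j, (l i)^2 = (∑ i, (l i)^2) - (l j)^2 := by
    have := Finset.add_sum_erase Finset.univ (fun i => (l i)^2) (Finset.mem_univ j)
    linarith [this.symm]
  rw [hrest_sum, hrest_sq] at hcs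
  -- now (1 - l j)^2 ≤ (N-1) * (S - (l j)^2) with S ≤ 1/(N-1)
  have hS : (∑ i, (l i)^2) ≤ 1 / ((N:ℝ) - 1) := hsq
  have key : (1 - l j)^2 + ((N:ℝ) - 1) * (l j)^2 ≤ ((N:ℝ) - 1) * (∑ i, (l i)^2) := by
    nlinarith
  have key2 : ((N:ℝ) - 1) * (∑ i, (l i)^2) ≤ 1 := by
    calc ((N:ℝ) - 1) * (∑ i, (l i)^2) ≤ ((N:ℝ) - 1) * (1 / ((N:ℝ)-1)) := by
          exact mul_le_mul_of_nonneg_left hS (le_of_lt hNpos)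
      _ = 1 := by field_simp
  nlinarith [sq_nonneg (l j), mul_pos hNpos (mul_pos (neg_pos.mpr hneg) (neg_pos.mpr hneg))]
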